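/- Let k be a field and let C ⊂ P³ be the curve parametrised by (s : t) ↦ (s⁴ : s³t : s²t² : t⁴). A quadratic form q in T₀, T₁, T₂, T₃ vanishes identically on C if and only if q is a k-linear combination of T₁² − T₀T₂ and T₂² − T₀T₃. -/

import Mathlib

set_option maxHeartbeats 1000000

open MvPolynomial

noncomputable def Dm (a b c d : ℕ) : Fin 4 →₀ ℕ :=
  Finsupp.single 0 a + Finsupp.single 1 b + Finsupp.single 2 c + Finsupp.single 3 d

lemma Dm_apply (a b c d : ℕ) (i : Fin 4) : Dm a b c d i = ![a,b,c,d] i := by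
  fin_cases i <;> simp [Dm, Finsupp.single_apply]

lemma Dm_inj {a b c d a' b' c' d' : ℕ} :
    Dm a b c d = Dm a' b' c' d' ↔ (a = a' ∧ b = b' ∧ c = c' ∧ d = d') := by
  constructor
  · intro h
    refine ⟨?_, ?_, ?_, ?_⟩
    · simpa [Dm_apply] using DFunLike.congr_fun h 0
    · simpa [Dm_apply] using DFunLike.congr_fun h 1
    · simpa [Dm_apply] using DFunLike.congr_fun h 2
    · simpa [Dm_apply] using DFunLike.congr_fun h 3
  · rintro ⟨rfl, rfl, rfl, rfl⟩; rfl

lemma deg4 (m : Fin 4 →₀ ℕ) : m.degree = m 0 + m 1 + m 2 + m 3 := by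
  rw [Finsupp.degree_apply, Finset.sum_subset (Finset.subset_univ _)]
  · simp [Fin.sum_univ_four]
  · intro x _ hx; simpa using Finsupp.notMem_support_iff.mp hx

lemma eq_Dm (m : Fin 4 →₀ ℕ) : m = Dm (m 0) (m 1) (m 2) (m 3) := by
  ext x
  rw [Dm_apply]
  fin_cases x <;> rfl

lemma classify (m : Fin 4 →₀ ℕ) (h : m 0 + m 1 + m 2 + m 3 = 2) :
    m = Dm 2 0 0 0 ∨ m = Dm 1 1 0 0 ∨ m = Dm 1 0 1 0 ∨ m = Dm 1 0 0 1 ∨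
    m = Dm 0 2 0 0 ∨ m = Dm 0 1 1 0 ∨ m = Dm 0 1 0 1 ∨ m = Dm 0 0 2 0 ∨
    m = Dm 0 0 1 1 ∨ m = Dm 0 0 0 2 := by
  have e := eq_Dm m
  obtain h' : (m 0 = 2 ∧ m 1 = 0 ∧ m 2 = 0 ∧ m 3 = 0) ∨ (m 0 = 1 ∧ m 1 = 1 ∧ m 2 = 0 ∧ m 3 = 0) ∨
      (m 0 = 1 ∧ m 1 = 0 ∧ m 2 = 1 ∧ m 3 = 0) ∨ (m 0 = 1 ∧ m 1 = 0 ∧ m 2 = 0 ∧ m 3 = 1) ∨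
      (m 0 = 0 ∧ m 1 = 2 ∧ m 2 = 0 ∧ m 3 = 0) ∨ (m 0 = 0 ∧ m 1 = 1 ∧ m 2 = 1 ∧ m 3 = 0) ∨
      (m 0 = 0 ∧ m 1 = 1 ∧ m 2 = 0 ∧ m 3 = 1) ∨ (m 0 = 0 ∧ m 1 = 0 ∧ m 2 = 2 ∧ m 3 = 0) ∨
      (m 0 = 0 ∧ m 1 = 0 ∧ m 2 = 1 ∧ m 3 = 1) ∨ (m 0 = 0 ∧ m 1 = 0 ∧ m 2 = 0 ∧ m 3 = 2) := by
    set a := m 0 with h0'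
    set b := m 1 with h1'
    set c := m 2 with h2'
    set d := m 3 with h3'
    have ha : a ≤ 2 := by omega
    have hb : b ≤ 2 := by omega
    have hc : c ≤ 2 := by omega
    have hd : d ≤ 2 := by omega
    interval_cases a <;> interval_cases b <;> interval_cases c <;> interval_cases d <;> omega
  rcases h' with h'|h'|h'|h'|h'|h'|h'|h'|h'|h' <;> obtain ⟨h0,h1,h2,h3⟩ := h'
  · rw [h0,h1,h2,h3] at e; exact Or.inl e
  · rw [h0,h1,h2,h3] at e; exact Or.inr (Or.inl e)
  · rw [h0,h1,h2,h3] at e; exact Or.inr (Or.inr (Or.inl e))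
  · rw [h0,h1,h2,h3] at e; exact Or.inr (Or.inr (Or.inr (Or.inl e)))
  · rw [h0,h1,h2,h3] at e; exact Or.inr (Or.inr (Or.inr (Or.inr (Or.inl e))))
  · rw [h0,h1,h2,h3] at e; exact Or.inr (Or.inr (Or.inr (Or.inr (Or.inr (Or.inl e)))))
  · rw [h0,h1,h2,h3] at e; exact Or.inr (Or.inr (Or.inr (Or.inr (Or.inr (Or.inr (Or.inl e))))))
  · rw [h0,h1,h2,h3] at e; exact Or.inr (Or.inr (Or.inr (Or.inr (Or.inr (Or.inr (Or.inr (Or.inl e)))))))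
  · rw [h0,h1,h2,h3] at e; exact Or.inr (Or.inr (Or.inr (Or.inr (Or.inr (Or.inr (Or.inr (Or.inr (Or.inl e))))))))
  · rw [h0,h1,h2,h3] at e; exact Or.inr (Or.inr (Or.inr (Or.inr (Or.inr (Or.inr (Or.inr (Or.inr (Or.inr e))))))))

lemma mono_eq {k : Type*} [Field k] (a b c d : ℕ) (r : k) :
    (monomial (Dm a b c d) r : MvPolynomial (Fin 4) k) =
      C r * X 0 ^ a * X 1 ^ b * X 2 ^ c * X 3 ^ d := by
  simp only [X_pow_eq_monomial, monomial_mul, C_mul_monomial, mul_one]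
  rfl

lemma decomp {k : Type*} [Field k] (q : MvPolynomial (Fin 4) k) (hq : q.IsHomogeneous 2) :
    q = monomial (Dm 2 0 0 0) (coeff (Dm 2 0 0 0) q) + monomial (Dm 1 1 0 0) (coeff (Dm 1 1 0 0) q)
      + monomial (Dm 1 0 1 0) (coeff (Dm 1 0 1 0) q) + monomial (Dm 1 0 0 1) (coeff (Dm 1 0 0 1) q)
      + monomial (Dm 0 2 0 0) (coeff (Dm 0 2 0 0) q) + monomial (Dm 0 1 1 0) (coeff (Dm 0 1 1 0) q)
      + monomial (Dm 0 1 0 1) (coeff (Dm 0 1 0 1) q) + monomial (Dm 0 0 2 0) (coeff (Dm 0 0 2 0) q)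
      + monomial (Dm 0 0 1 1) (coeff (Dm 0 0 1 1) q) + monomial (Dm 0 0 0 2) (coeff (Dm 0 0 0 2) q) := by
  ext m
  simp only [coeff_add, coeff_monomial]
  by_cases h2 : m 0 + m 1 + m 2 + m 3 = 2
  · rcases classify m h2 with rfl|rfl|rfl|rfl|rfl|rfl|rfl|rfl|rfl|rfl <;> simp [Dm_inj]
  · have hne : ∀ a b c d : ℕ, a + b + c + d = 2 → ¬(Dm a b c d = m) := by
      intro a b c d hs e
      apply h2
      rw [← e]
      simpa [Dm_apply] using hs
    rw [hq.coeff_eq_zero (by rw [deg4]; exact h2)]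
    simp [hne]

/-- A quadratic form q in T₀,…,T₃ vanishes identically on the curve
(s : t) ↦ (s⁴ : s³t : s²t² : t⁴) iff q is a k-linear combination of T₁² − T₀T₂ and
T₂² − T₀T₃. -/
theorem stmt11 {k : Type*} [Field k] (q : MvPolynomial (Fin 4) k)
    (hq : q.IsHomogeneous 2) :
    (aeval (![(X 0) ^ 4, (X 0) ^ 3 * X 1, (X 0) ^ 2 * (X 1) ^ 2, (X 1) ^ 4] :
        Fin 4 → MvPolynomial (Fin 2) k) q = 0) ↔
      ∃ a b : k, q = C a * (X 1 ^ 2 - X 0 * X 2) + C b * (X 2 ^ 2 - X 0 * X 3) := by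
  constructor
  · intro h0
    have h1 : (aeval ![(1:Polynomial k), Polynomial.X])
        ((aeval (![(X 0) ^ 4, (X 0) ^ 3 * X 1, (X 0) ^ 2 * (X 1) ^ 2, (X 1) ^ 4] :
        Fin 4 → MvPolynomial (Fin 2) k)) q) = 0 := by rw [h0]; simp
    rw [decomp q hq] at h1
    simp only [map_add, map_mul, map_pow, aeval_X, mono_eq, aeval_C,
      Matrix.cons_val_zero, Matrix.cons_val_one, Matrix.head_cons,
      Matrix.cons_val_two, Matrix.cons_val_three, Matrix.tail_cons,
      pow_zero, pow_one, mul_one, one_mul, one_pow, MvPolynomial.algebraMap_eq,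
      aeval_C, Polynomial.algebraMap_eq] at h1
    ring_nf at h1
    have e0 := congrArg (fun p => Polynomial.coeff p 0) h1
    have e1 := congrArg (fun p => Polynomial.coeff p 1) h1
    have e2 := congrArg (fun p => Polynomial.coeff p 2) h1
    have e3 := congrArg (fun p => Polynomial.coeff p 3) h1
    have e4 := congrArg (fun p => Polynomial.coeff p 4) h1
    have e5 := congrArg (fun p => Polynomial.coeff p 5) h1
    have e6 := congrArg (fun p => Polynomial.coeff p 6) h1
    have e8 := congrArg (fun p => Polynomial.coeff p 8) h1
    simp only [Polynomial.coeff_add, Polynomial.coeff_C_mul, Polynomial.coeff_mul_C,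
      Polynomial.coeff_X_pow, Polynomial.coeff_C, Polynomial.coeff_X, Polynomial.coeff_zero]
      at e0 e1 e2 e3 e4 e5 e6 e8
    norm_num at e0 e1 e2 e3 e4 e5 e6 e8
    refine ⟨coeff (Dm 0 2 0 0) q, coeff (Dm 0 0 2 0) q, ?_⟩
    have z2 : coeff (Dm 1 0 1 0) q = -coeff (Dm 0 2 0 0) q := eq_neg_of_add_eq_zero_left e2
    have z4 : coeff (Dm 1 0 0 1) q = -coeff (Dm 0 0 2 0) q := eq_neg_of_add_eq_zero_left e4
    conv_lhs => rw [decomp q hq]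
    simp only [mono_eq, e0, e1, e3, e5, e6, e8, z2, z4, map_zero, map_neg]
    ring
  · rintro ⟨a, b, rfl⟩
    simp only [map_add, map_mul, map_sub, map_pow, aeval_X, aeval_C,
      Matrix.cons_val_zero, Matrix.cons_val_one, Matrix.head_cons,
      Matrix.cons_val_two, Matrix.cons_val_three, Matrix.tail_cons]
    ring
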